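/- There exist constants c > 0 and C > 0 such that the following holds for every prime power q. Let G = SL(2,q) and let v, w ∈ F_q. Suppose that either q is even, or q is odd and (v², w²) ≠ (−4, −4) and (v, w) ≠ (0, 0). Let D be the distribution of Tr( [[0,1],[1,w]] · u · [[v,1],[1,0]] · u^{-1} ) where u is uniform in G and the matrices are 2×2 matrices over F_q. Then (1) Pr[D = x] ≤ C/q for every x ∈ F_q, and (2) D is C·q^{-c}-close in statistical distance to the uniform distribution on F_q. -/

import Mathlib

open Matrix Finset

variable {F : Type} [Field F] [Fintype F] [DecidableEq F]

/-- a quadratic vanishing at three distinct points is the zero polynomial -/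
lemma quad3 {a b c t1 t2 t3 : F} (h12 : t1 ≠ t2) (h13 : t1 ≠ t3) (h23 : t2 ≠ t3)
    (e1 : a*t1^2 + b*t1 + c = 0) (e2 : a*t2^2 + b*t2 + c = 0) (e3 : a*t3^2 + b*t3 + c = 0) :
    a = 0 ∧ b = 0 ∧ c = 0 := by
  have d12 : (t1 - t2) * (a*(t1+t2) + b) = 0 := by linear_combination e1 - e2
  have d13 : (t1 - t3) * (a*(t1+t3) + b) = 0 := by linear_combination e1 - e3
  have h12' : a*(t1+t2) + b = 0 := by
    rcases mul_eq_zero.mp d12 with h | h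
    · exact absurd (sub_eq_zero.mp h) h12
    · exact h
  have h13' : a*(t1+t3) + b = 0 := by
    rcases mul_eq_zero.mp d13 with h | h
    · exact absurd (sub_eq_zero.mp h) h13
    · exact h
  have ha : a * (t2 - t3) = 0 := by linear_combination h12' - h13'
  have ha' : a = 0 := by
    rcases mul_eq_zero.mp ha with h | h
    · exact h
    · exact absurd (sub_eq_zero.mp h) h23
  refine ⟨ha', ?_, ?_⟩
  · linear_combination h12' - (t1+t2) * ha'
  · linear_combination e1 - t1^2 * ha' - t1 * (h12' - (t1+t2) * ha')

lemma card_quad_roots_le {a b c : F} (ha : a ≠ 0) :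
    (univ.filter (fun t : F => a*t^2 + b*t + c = 0)).card ≤ 2 := by
  by_contra h
  push_neg at h
  obtain ⟨t1, t2, t3, h1, h2, h3, h12, h13, h23⟩ := Finset.two_lt_card_iff.mp h
  simp only [mem_filter, mem_univ, true_and] at h1 h2 h3
  exact ha (quad3 h12 h13 h23 h1 h2 h3).1

/-- a curve monic-quadratic in the first variable has at most 2q points -/
lemma card_curve_le_two_q (f g : F → F) :
    (univ.filter (fun p : F × F => p.1^2 + f p.2 * p.1 + g p.2 = 0)).card
      ≤ 2 * Fintype.card F := by
  rw [Finset.card_eq_sum_card_fiberwise (f := Prod.snd) (t := univ) (fun x _ => mem_univ _)]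
  have : ∀ δ : F, ((univ.filter (fun p : F × F => p.1^2 + f p.2 * p.1 + g p.2 = 0)).filter
      (fun p => p.2 = δ)).card ≤ 2 := by
    intro δ
    have h2 : ((univ.filter (fun t : F => 1*t^2 + f δ*t + g δ = 0))).card ≤ 2 :=
      card_quad_roots_le one_ne_zero
    refine le_trans (Finset.card_le_card_of_injOn (fun p => p.1) ?_ ?_) h2
    · intro p hp
      simp only [Finset.mem_coe, mem_filter, mem_univ, true_and] at hp
      obtain ⟨h1, h2'⟩ := hp
      subst h2'
      refine mem_filter.mpr ⟨mem_univ _, ?_⟩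
      linear_combination h1
    · intro p hp p' hp' hpp
      simp only [Finset.coe_filter, Set.mem_setOf_eq, mem_univ, true_and] at hp hp'
      exact Prod.ext hpp (hp.2.trans hp'.2.symm)
  calc ∑ δ : F, ((univ.filter (fun p : F × F => p.1^2 + f p.2 * p.1 + g p.2 = 0)).filter
      (fun p => p.2 = δ)).card ≤ ∑ _δ : F, 2 := Finset.sum_le_sum (fun δ _ => this δ)
    _ = 2 * Fintype.card F := by simp [mul_comm]

/-- more than q+2 points means three distinct collinear points -/
lemma exists_collinear (Z : Finset (F × F)) (hZ : Fintype.card F + 2 < Z.card) :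
    ∃ p0 p1 p2 : F × F, p0 ∈ Z ∧ p1 ∈ Z ∧ p2 ∈ Z ∧ p0 ≠ p1 ∧ p0 ≠ p2 ∧ p1 ≠ p2 ∧
      (p1.1 - p0.1) * (p2.2 - p0.2) - (p1.2 - p0.2) * (p2.1 - p0.1) = 0 := by
  have hne : Z.Nonempty := Finset.card_pos.mp (by omega)
  obtain ⟨p0, hp0⟩ := hne
  have hZ'card : Fintype.card (Option F) < (Z.erase p0).card := by
    rw [Fintype.card_option]
    have := Finset.card_erase_of_mem hp0
    omega
  have hmap : ∀ p ∈ Z.erase p0, (if p.1 = p0.1 then (none : Option F)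
      else some ((p.2 - p0.2) * (p.1 - p0.1)⁻¹)) ∈ (univ : Finset (Option F)) :=
    fun p _ => mem_univ _
  obtain ⟨p1, hp1, p2, hp2, hne12, heq⟩ :=
    Finset.exists_ne_map_eq_of_card_lt_of_maps_to (by simpa using hZ'card) hmap
  refine ⟨p0, p1, p2, hp0, Finset.mem_of_mem_erase hp1, Finset.mem_of_mem_erase hp2,
    (Finset.ne_of_mem_erase hp1).symm, (Finset.ne_of_mem_erase hp2).symm, hne12, ?_⟩
  by_cases h1 : p1.1 = p0.1
  · rw [if_pos h1] at heq
    by_cases h2 : p2.1 = p0.1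
    · rw [h1, h2]; ring
    · rw [if_neg h2] at heq; exact absurd heq.symm (by simp)
  · rw [if_neg h1] at heq
    by_cases h2 : p2.1 = p0.1
    · rw [if_pos h2] at heq; exact absurd heq (by simp)
    · rw [if_neg h2] at heq
      have h1' : p1.1 - p0.1 ≠ 0 := sub_ne_zero.mpr h1
      have h2' : p2.1 - p0.1 ≠ 0 := sub_ne_zero.mpr h2
      have := Option.some_injective _ heq
      field_simp at this
      linear_combination -this
/-- the affine conic attached to parameters (v,w,x) -/
def conicSet (v w x : F) : Finset (F × F) :=
  univ.filter (fun p : F × F =>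
    p.1^2 + (w*p.2 - x) * p.1 + (-p.2^2 + v*p.2 + 1) = 0)

lemma conicSet_card_le (v w x : F) :
    (conicSet v w x).card ≤ 2 * Fintype.card F :=
  card_curve_le_two_q (fun δ => w*δ - x) (fun δ => -δ^2 + v*δ + 1)

lemma conic_bad {v w x : F} (h : Fintype.card F + 2 < (conicSet v w x).card) :
    ∃ e k : F, e ≠ 0 ∧ e^2 + w*e - 1 = 0 ∧ (e+w)*k^2 + v*k - e = 0 ∧
      x*e = 2*(e*k) + w*k + v := by
  obtain ⟨p0, p1, p2, h0, h1, h2, n01, n02, n12, hcross⟩ := exists_collinear _ h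
  simp only [conicSet, mem_filter, mem_univ, true_and] at h0 h1 h2
  by_cases hu2 : p1.2 - p0.2 = 0
  · exfalso
    have hp12 : p1.2 = p0.2 := sub_eq_zero.mp hu2
    have hu1 : p1.1 - p0.1 ≠ 0 := by
      intro h'
      exact n01 (Prod.ext (sub_eq_zero.mp h').symm hp12.symm)
    have hp22 : p2.2 = p0.2 := by
      have : (p1.1 - p0.1) * (p2.2 - p0.2) = 0 := by linear_combination hcross + (p2.1 - p0.1) * hu2
      rcases mul_eq_zero.mp this with h' | h'
      · exact absurd h' hu1
      · exact sub_eq_zero.mp h'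
    have d01 : p0.1 ≠ p1.1 := fun h' => n01 (Prod.ext h' hp12.symm)
    have d02 : p0.1 ≠ p2.1 := fun h' => n02 (Prod.ext h' hp22.symm)
    have d12 : p1.1 ≠ p2.1 := fun h' => n12 (Prod.ext h' (hp12.trans hp22.symm))
    have e0 : (1:F)*p0.1^2 + (w*p0.2 - x)*p0.1 + (-p0.2^2 + v*p0.2 + 1) = 0 := by
      linear_combination h0
    have e1 : (1:F)*p1.1^2 + (w*p0.2 - x)*p1.1 + (-p0.2^2 + v*p0.2 + 1) = 0 := by
      rw [← hp12]; linear_combination h1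
    have e2 : (1:F)*p2.1^2 + (w*p0.2 - x)*p2.1 + (-p0.2^2 + v*p0.2 + 1) = 0 := by
      rw [← hp22]; linear_combination h2
    exact one_ne_zero (quad3 d01 d02 d12 e0 e1 e2).1
  · set e := (p1.1 - p0.1) * (p1.2 - p0.2)⁻¹ with he
    set k := p0.1 - e * p0.2 with hk
    have l0 : e * p0.2 + k - p0.1 = 0 := by rw [hk]; ring
    have hee : (p1.2 - p0.2) * e = p1.1 - p0.1 := by
      rw [he]; field_simp
    have l1 : e * p1.2 + k - p1.1 = 0 := by
      rw [hk]; linear_combination hee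
    have l2 : e * p2.2 + k - p2.1 = 0 := by
      have l2' : (p1.2 - p0.2) * (e * p2.2 + k - p2.1) = 0 := by
        rw [hk]; linear_combination hcross + (p2.2 - p0.2) * hee
      rcases mul_eq_zero.mp l2' with h' | h'
      · exact absurd h' hu2
      · exact h'
    have d01 : p0.2 ≠ p1.2 := by
      intro h'
      apply n01
      have : p0.1 = p1.1 := by linear_combination e * h' - l0 + l1
      exact Prod.ext this h'
    have d02 : p0.2 ≠ p2.2 := by
      intro h'
      apply n02
      have : p0.1 = p2.1 := by linear_combination e * h' - l0 + l2
      exact Prod.ext this h'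
    have d12 : p1.2 ≠ p2.2 := by
      intro h'
      apply n12
      have : p1.1 = p2.1 := by linear_combination e * h' - l1 + l2
      exact Prod.ext this h'
    have e0 : (e^2 + w*e - 1)*p0.2^2 + (2*(e*k) + w*k - x*e + v)*p0.2 + (k^2 - x*k + 1) = 0 := by
      linear_combination h0 + (e*p0.2 + k + p0.1 + w*p0.2 - x) * l0
    have e1 : (e^2 + w*e - 1)*p1.2^2 + (2*(e*k) + w*k - x*e + v)*p1.2 + (k^2 - x*k + 1) = 0 := by
      linear_combination h1 + (e*p1.2 + k + p1.1 + w*p1.2 - x) * l1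
    have e2 : (e^2 + w*e - 1)*p2.2^2 + (2*(e*k) + w*k - x*e + v)*p2.2 + (k^2 - x*k + 1) = 0 := by
      linear_combination h2 + (e*p2.2 + k + p2.1 + w*p2.2 - x) * l2
    obtain ⟨hA, hB, hC⟩ := quad3 d01 d02 d12 e0 e1 e2
    have he0 : e ≠ 0 := by
      intro h'
      rw [h'] at hA
      simp at hA
    exact ⟨e, k, he0, hA, by linear_combination k*hB - e*hC, by linear_combination -hB⟩

/-- the set of exceptional values of x -/
def badSet (v w : F) : Finset F :=
  ((univ : Finset (F × F)).filter (fun p =>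
    p.1^2 + w*p.1 - 1 = 0 ∧ (p.1+w)*p.2^2 + v*p.2 - p.1 = 0)).image
    (fun p => (2*(p.1*p.2) + w*p.2 + v) * p.1⁻¹)

lemma badSet_card_le (v w : F) : (badSet v w).card ≤ 4 := by
  refine le_trans Finset.card_image_le ?_
  have hmaps : ∀ p ∈ (univ : Finset (F × F)).filter (fun p =>
      p.1^2 + w*p.1 - 1 = 0 ∧ (p.1+w)*p.2^2 + v*p.2 - p.1 = 0),
      p.1 ∈ univ.filter (fun e : F => 1*e^2 + w*e + (-1) = 0) := by
    intro p hp
    simp only [mem_filter, mem_univ, true_and] at hp ⊢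
    linear_combination hp.1
  rw [Finset.card_eq_sum_card_fiberwise hmaps]
  have hfib : ∀ e ∈ univ.filter (fun e : F => 1*e^2 + w*e + (-1) = 0),
      (((univ : Finset (F × F)).filter (fun p =>
        p.1^2 + w*p.1 - 1 = 0 ∧ (p.1+w)*p.2^2 + v*p.2 - p.1 = 0)).filter
        (fun p => p.1 = e)).card ≤ 2 := by
    intro e he
    simp only [mem_filter, mem_univ, true_and] at he
    have hew : e + w ≠ 0 := by
      intro h'
      have : (1:F) = 0 := by linear_combination -he + e * h'
      exact one_ne_zero this
    refine le_trans (Finset.card_le_card_of_injOn (fun p => p.2) ?_ ?_)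
      (card_quad_roots_le (b := v) (c := -e) hew)
    · intro p hp
      simp only [Finset.mem_coe, mem_filter, mem_univ, true_and] at hp ⊢
      obtain ⟨⟨_, h2⟩, h3⟩ := hp
      rw [h3] at h2
      linear_combination h2
    · intro p hp p' hp' hpp
      simp only [Finset.coe_filter, Set.mem_setOf_eq, mem_univ, true_and] at hp hp'
      exact Prod.ext (hp.2.trans hp'.2.symm) hpp
  calc ∑ e ∈ univ.filter (fun e : F => 1*e^2 + w*e + (-1) = 0), (((univ : Finset (F × F)).filter
        (fun p => p.1^2 + w*p.1 - 1 = 0 ∧ (p.1+w)*p.2^2 + v*p.2 - p.1 = 0)).filter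
        (fun p => p.1 = e)).card
      ≤ ∑ _e ∈ univ.filter (fun e : F => 1*e^2 + w*e + (-1) = 0), 2 :=
        Finset.sum_le_sum hfib
    _ = (univ.filter (fun e : F => 1*e^2 + w*e + (-1) = 0)).card * 2 := by
        rw [Finset.sum_const, smul_eq_mul]
    _ ≤ 4 := by
        have := card_quad_roots_le (a := (1:F)) (b := w) (c := -1) one_ne_zero
        omega

lemma mem_badSet_of_large {v w x : F} (h : Fintype.card F + 2 < (conicSet v w x).card) :
    x ∈ badSet v w := by
  obtain ⟨e, k, he0, hA, hK, hX⟩ := conic_bad h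
  refine Finset.mem_image.mpr ⟨(e, k), mem_filter.mpr ⟨mem_univ _, ⟨hA, hK⟩⟩, ?_⟩
  field_simp
  linear_combination -hX
/-- matrices with trace v and determinant -1 -/
def TD (v : F) : Finset (Matrix (Fin 2) (Fin 2) F) :=
  univ.filter (fun M => M 0 0 + M 1 1 = v ∧ M 0 0 * M 1 1 - M 0 1 * M 1 0 = -1)

/-- non-scalar matrices with trace v and determinant -1 -/
def Xset (v : F) : Finset (Matrix (Fin 2) (Fin 2) F) :=
  (TD v).filter (fun M => ¬(M 0 1 = 0 ∧ M 1 0 = 0 ∧ M 0 0 = M 1 1))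

/-- those with prescribed O-trace -/
def Sx (v e1 e4 x : F) : Finset (Matrix (Fin 2) (Fin 2) F) :=
  (Xset v).filter (fun M => e1 * M 0 0 + M 1 0 + M 0 1 + e4 * M 1 1 = x)

lemma Sx_card_le_conic (v e1 e4 x : F) :
    (Sx v e1 e4 x).card ≤ (conicSet v (e4 - e1) (x - e1*v)).card := by
  refine Finset.card_le_card_of_injOn (fun M => (M 1 0, M 1 1)) ?_ ?_
  · intro M hM
    simp only [Finset.mem_coe, Sx, Xset, TD, mem_filter, mem_univ, true_and] at hM
    obtain ⟨⟨⟨htr, hdet⟩, _⟩, htrO⟩ := hM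
    simp only [Finset.mem_coe, conicSet, mem_filter, mem_univ, true_and]
    linear_combination hdet + M 1 0 * htrO - (M 1 1 + e1 * M 1 0) * htr
  · intro M hM M' hM' hMM
    simp only [Finset.coe_filter, Set.mem_setOf_eq, Sx, Xset, TD, mem_filter,
      mem_univ, true_and] at hM hM'
    obtain ⟨⟨⟨htr, hdet⟩, _⟩, htrO⟩ := hM
    obtain ⟨⟨⟨htr', hdet'⟩, _⟩, htrO'⟩ := hM'
    have h10 : M 1 0 = M' 1 0 := congrArg Prod.fst hMM
    have h11 : M 1 1 = M' 1 1 := congrArg Prod.snd hMM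
    have h00 : M 0 0 = M' 0 0 := by linear_combination htr - htr' - h11
    have h01 : M 0 1 = M' 0 1 := by
      linear_combination htrO - htrO' - e1 * h00 - h10 - e4 * h11
    ext i j
    fin_cases i <;> fin_cases j <;> assumption
lemma Sx_card_le_two_q (v e1 e4 x : F) :
    (Sx v e1 e4 x).card ≤ 2 * Fintype.card F :=
  le_trans (Sx_card_le_conic v e1 e4 x) (conicSet_card_le _ _ _)

lemma Sx_card_le_good (v e1 e4 x : F) (hx : x - e1*v ∉ badSet v (e4 - e1)) :
    (Sx v e1 e4 x).card ≤ Fintype.card F + 2 := by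
  refine le_trans (Sx_card_le_conic v e1 e4 x) ?_
  by_contra h
  push_neg at h
  exact hx (mem_badSet_of_large h)

lemma TD_card_lower (v : F) :
    Fintype.card F * (Fintype.card F - 1) ≤ (TD v).card := by
  have hcard : ((univ : Finset F) ×ˢ ((univ : Finset F).erase 0)).card
      = Fintype.card F * (Fintype.card F - 1) := by
    rw [Finset.card_product, Finset.card_erase_of_mem (mem_univ 0), Finset.card_univ]
  rw [← hcard]
  refine Finset.card_le_card_of_injOn
    (fun p => !![v - p.1, p.2; ((v - p.1)*p.1 + 1) * p.2⁻¹, p.1]) ?_ ?_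
  · intro p hp
    simp only [Finset.mem_coe, Finset.mem_product, Finset.mem_erase, mem_univ, true_and, and_true] at hp
    simp only [Finset.mem_coe, TD, mem_filter, mem_univ, true_and]
    constructor
    · simp [Matrix.cons_val_zero, Matrix.cons_val_one, Matrix.head_cons]
    · simp only [Matrix.of_apply, Matrix.cons_val', Matrix.cons_val_zero, Matrix.cons_val_one,
        Matrix.head_cons, Matrix.empty_val', Matrix.cons_val_fin_one]
      field_simp
      ring
  · intro p hp p' hp' hpp
    have h1 : p.1 = p'.1 := by
      have := congrFun (congrFun hpp 1) 1
      simpa using this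
    have h2 : p.2 = p'.2 := by
      have := congrFun (congrFun hpp 0) 1
      simpa using this
    exact Prod.ext h1 h2

lemma TD_card_upper (v : F) : (TD v).card ≤ (Xset v).card + 2 := by
  have hsplit := Finset.card_filter_add_card_filter_not
    (s := TD v) (p := fun M => ¬(M 0 1 = 0 ∧ M 1 0 = 0 ∧ M 0 0 = M 1 1))
  have hXeq : (TD v).filter (fun M => ¬(M 0 1 = 0 ∧ M 1 0 = 0 ∧ M 0 0 = M 1 1)) = Xset v := rfl
  rw [hXeq] at hsplit
  have hscal : ((TD v).filter (fun M => ¬¬(M 0 1 = 0 ∧ M 1 0 = 0 ∧ M 0 0 = M 1 1))).card ≤ 2 := by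
    refine le_trans (Finset.card_le_card_of_injOn (fun M => M 0 0) ?_ ?_)
      (card_quad_roots_le (a := (1:F)) (b := 0) (c := 1) one_ne_zero)
    · intro M hM
      simp only [Finset.mem_coe, TD, mem_filter, mem_univ, true_and, not_not] at hM
      obtain ⟨⟨htr, hdet⟩, h01, h10, hd⟩ := hM
      simp only [Finset.mem_coe, mem_filter, mem_univ, true_and]
      rw [h01, h10] at hdet
      rw [← hd] at hdet
      linear_combination hdet
    · intro M hM M' hM' hMM
      simp only [Finset.coe_filter, Set.mem_setOf_eq, TD, mem_filter,
        mem_univ, true_and, not_not] at hM hM'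
      obtain ⟨⟨htr, hdet⟩, h01, h10, hd⟩ := hM
      obtain ⟨⟨htr', hdet'⟩, h01', h10', hd'⟩ := hM'
      have e00 : M 0 0 = M' 0 0 := hMM
      have e01 : M 0 1 = M' 0 1 := by rw [h01, h01']
      have e10 : M 1 0 = M' 1 0 := by rw [h10, h10']
      have e11 : M 1 1 = M' 1 1 := by rw [← hd, ← hd']; exact hMM
      ext i j
      fin_cases i <;> fin_cases j <;> assumption
  rw [← hsplit]
  exact Nat.add_le_add_left hscal _
lemma two_ne_zero_of_odd_card (hodd : Fintype.card F % 2 = 1) : (2:F) ≠ 0 := by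
  intro h2
  have hchar : ringChar F = 2 := by
    have hdvd : ringChar F ∣ 2 := (CharP.cast_eq_zero_iff F (ringChar F) 2).mp (by exact_mod_cast h2)
    have hprime : (ringChar F).Prime := CharP.char_is_prime F (ringChar F)
    exact (Nat.prime_dvd_prime_iff_eq hprime Nat.prime_two).mp hdvd
  rw [FiniteField.even_card_iff_char_two] at hchar
  omega

lemma rep_one_odd_lead (hodd : Fintype.card F % 2 = 1) {a b c : F} (ha : a ≠ 0)
    (hd : b^2 - 4*(a*c) ≠ 0) : ∃ y z : F, a*y^2 + b*(y*z) + c*z^2 = 1 := by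
  have h2 : (2:F) ≠ 0 := two_ne_zero_of_odd_card hodd
  have h2a : 2*a ≠ 0 := mul_ne_zero h2 ha
  have h4 : (4:F) ≠ 0 := by
    have : (4:F) = 2*2 := by norm_num
    rw [this]; exact mul_ne_zero h2 h2
  have h4a : (4:F)*a ≠ 0 := mul_ne_zero h4 ha
  have hD : 4*(a*c) - b^2 ≠ 0 := by intro h; exact hd (by linear_combination -h)
  obtain ⟨s, t, hst⟩ := FiniteField.exists_root_sum_quadratic
    (f := Polynomial.C 1 * Polynomial.X^2 + Polynomial.C 0 * Polynomial.X + Polynomial.C (-(4*a)))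
    (g := Polynomial.C (4*(a*c) - b^2) * Polynomial.X^2 + Polynomial.C 0 * Polynomial.X + Polynomial.C 0)
    (Polynomial.degree_quadratic one_ne_zero) (Polynomial.degree_quadratic hD) hodd
  simp only [Polynomial.eval_add, Polynomial.eval_mul, Polynomial.eval_pow,
    Polynomial.eval_C, Polynomial.eval_X] at hst
  have hst' : s^2 + (4*(a*c) - b^2)*t^2 - 4*a = 0 := by linear_combination hst
  set y := (s - b*t) / (2*a) with hy
  have hy' : 2*a*y - (s - b*t) = 0 := by rw [hy]; field_simp; ring
  refine ⟨y, t, ?_⟩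
  have hmul : (4*a)*(a*y^2 + b*(y*t) + c*t^2 - 1) = 0 := by
    linear_combination (2*a*y + s + b*t) * hy' + hst'
  rcases mul_eq_zero.mp hmul with h | h
  · exact absurd h h4a
  · linear_combination h

lemma rep_one_char2 (h2 : ringChar F = 2) {a b c : F} (h : ¬(a = 0 ∧ b = 0 ∧ c = 0)) :
    ∃ y z : F, a*y^2 + b*(y*z) + c*z^2 = 1 := by
  by_cases ha : a = 0
  · by_cases hc : c = 0
    · have hb : b ≠ 0 := by tauto
      refine ⟨1, b⁻¹, ?_⟩
      rw [ha, hc]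
      field_simp
      ring
    · obtain ⟨r, hr⟩ := FiniteField.isSquare_of_char_two h2 c⁻¹
      refine ⟨0, r, ?_⟩
      rw [ha]
      have : c * r^2 = 1 := by rw [pow_two, ← hr]; field_simp
      linear_combination this
  · obtain ⟨r, hr⟩ := FiniteField.isSquare_of_char_two h2 a⁻¹
    refine ⟨r, 0, ?_⟩
    have : a * r^2 = 1 := by rw [pow_two, ← hr]; field_simp
    linear_combination this

lemma rep_one {a b c : F}
    (hgood : ringChar F = 2 ∨ (Fintype.card F % 2 = 1 ∧ b^2 - 4*(a*c) ≠ 0))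
    (h : ¬(a = 0 ∧ b = 0 ∧ c = 0)) : ∃ y z : F, a*y^2 + b*(y*z) + c*z^2 = 1 := by
  rcases hgood with h2 | ⟨hodd, hd⟩
  · exact rep_one_char2 h2 h
  · by_cases ha : a = 0
    · have hb : b ≠ 0 := by
        intro hb
        exact hd (by rw [ha, hb]; ring)
      refine ⟨(1 - c)/b, 1, ?_⟩
      rw [ha]
      field_simp
      ring
    · exact rep_one_odd_lead hodd ha hd

lemma conj_to_companion {v : F}
    (hgood : ringChar F = 2 ∨ (Fintype.card F % 2 = 1 ∧ v^2 + 4 ≠ 0))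
    {M : Matrix (Fin 2) (Fin 2) F} (hM : M ∈ Xset v) :
    ∃ g : Matrix.SpecialLinearGroup (Fin 2) F,
      M * (g : Matrix (Fin 2) (Fin 2) F) = (g : Matrix (Fin 2) (Fin 2) F) * !![v, 1; 1, 0] := by
  simp only [Xset, TD, mem_filter, mem_univ, true_and] at hM
  obtain ⟨⟨htr, hdet⟩, hns⟩ := hM
  have hcoef : ¬(-(M 1 0) = 0 ∧ (M 0 0 - M 1 1) = 0 ∧ M 0 1 = 0) := by
    rintro ⟨h1, h2, h3⟩
    exact hns ⟨h3, by simpa using h1, sub_eq_zero.mp h2⟩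
  have hgood' : ringChar F = 2 ∨ (Fintype.card F % 2 = 1 ∧
      (M 0 0 - M 1 1)^2 - 4*((-(M 1 0))*(M 0 1)) ≠ 0) := by
    rcases hgood with h | ⟨hodd, hv⟩
    · exact Or.inl h
    · refine Or.inr ⟨hodd, ?_⟩
      have : (M 0 0 - M 1 1)^2 - 4*((-(M 1 0))*(M 0 1)) = v^2 + 4 := by
        linear_combination (M 0 0 + M 1 1 + v)*htr - 4*hdet
      rw [this]; exact hv
  obtain ⟨y, z, hyz⟩ := rep_one hgood' hcoef
  have hdetg : (!![M 0 0*y + M 0 1*z, y; M 1 0*y + M 1 1*z, z]).det = 1 := by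
    rw [Matrix.det_fin_two]
    simp only [Matrix.cons_val_zero, Matrix.cons_val_one, Matrix.head_cons, Matrix.cons_val',
      Matrix.empty_val', Matrix.cons_val_fin_one, Matrix.head_fin_const, Matrix.of_apply,
      Matrix.cons_val_fin_one]
    linear_combination hyz
  refine ⟨⟨!![M 0 0*y + M 0 1*z, y; M 1 0*y + M 1 1*z, z], hdetg⟩, ?_⟩
  have hcoe : ((⟨!![M 0 0*y + M 0 1*z, y; M 1 0*y + M 1 1*z, z], hdetg⟩ :
      Matrix.SpecialLinearGroup (Fin 2) F) : Matrix (Fin 2) (Fin 2) F)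
      = !![M 0 0*y + M 0 1*z, y; M 1 0*y + M 1 1*z, z] := rfl
  rw [hcoe]
  have e00 : (M * !![M 0 0*y + M 0 1*z, y; M 1 0*y + M 1 1*z, z]) 0 0
      = (!![M 0 0*y + M 0 1*z, y; M 1 0*y + M 1 1*z, z] * !![v, 1; 1, 0]) 0 0 := by
    simp [Matrix.mul_apply, Fin.sum_univ_two]
    linear_combination (M 0 0*y + M 0 1*z)*htr - y*hdet
  have e01 : (M * !![M 0 0*y + M 0 1*z, y; M 1 0*y + M 1 1*z, z]) 0 1
      = (!![M 0 0*y + M 0 1*z, y; M 1 0*y + M 1 1*z, z] * !![v, 1; 1, 0]) 0 1 := by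
    simp [Matrix.mul_apply, Fin.sum_univ_two]
  have e10 : (M * !![M 0 0*y + M 0 1*z, y; M 1 0*y + M 1 1*z, z]) 1 0
      = (!![M 0 0*y + M 0 1*z, y; M 1 0*y + M 1 1*z, z] * !![v, 1; 1, 0]) 1 0 := by
    simp [Matrix.mul_apply, Fin.sum_univ_two]
    linear_combination (M 1 0*y + M 1 1*z)*htr - z*hdet
  have e11 : (M * !![M 0 0*y + M 0 1*z, y; M 1 0*y + M 1 1*z, z]) 1 1
      = (!![M 0 0*y + M 0 1*z, y; M 1 0*y + M 1 1*z, z] * !![v, 1; 1, 0]) 1 1 := by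
    simp [Matrix.mul_apply, Fin.sum_univ_two]
  ext i j
  fin_cases i <;> fin_cases j <;> assumption
lemma coe_mul_inv (u : Matrix.SpecialLinearGroup (Fin 2) F) :
    (u : Matrix (Fin 2) (Fin 2) F) * ((u⁻¹ : Matrix.SpecialLinearGroup (Fin 2) F) :
      Matrix (Fin 2) (Fin 2) F) = 1 := by
  rw [← Matrix.SpecialLinearGroup.coe_mul]
  simp

lemma coe_inv_mul (u : Matrix.SpecialLinearGroup (Fin 2) F) :
    ((u⁻¹ : Matrix.SpecialLinearGroup (Fin 2) F) : Matrix (Fin 2) (Fin 2) F) *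
      (u : Matrix (Fin 2) (Fin 2) F) = 1 := by
  rw [← Matrix.SpecialLinearGroup.coe_mul]
  simp

lemma conj_trans {v : F}
    (hgood : ringChar F = 2 ∨ (Fintype.card F % 2 = 1 ∧ v^2 + 4 ≠ 0))
    {M B₀ : Matrix (Fin 2) (Fin 2) F} (hM : M ∈ Xset v) (hB : B₀ ∈ Xset v) :
    ∃ s : Matrix.SpecialLinearGroup (Fin 2) F,
      (s : Matrix (Fin 2) (Fin 2) F) * B₀ = M * (s : Matrix (Fin 2) (Fin 2) F) := by
  obtain ⟨g, hg⟩ := conj_to_companion hgood hM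
  obtain ⟨h, hh⟩ := conj_to_companion hgood hB
  refine ⟨g * h⁻¹, ?_⟩
  rw [Matrix.SpecialLinearGroup.coe_mul]
  have hstep : ((h⁻¹ : Matrix.SpecialLinearGroup (Fin 2) F) : Matrix (Fin 2) (Fin 2) F) * B₀
      = !![v, 1; 1, 0] * ((h⁻¹ : Matrix.SpecialLinearGroup (Fin 2) F) : Matrix (Fin 2) (Fin 2) F) := by
    calc ((h⁻¹ : Matrix.SpecialLinearGroup (Fin 2) F) : Matrix (Fin 2) (Fin 2) F) * B₀
        = ↑h⁻¹ * (B₀ * (↑h * ↑h⁻¹)) := by rw [coe_mul_inv, mul_one]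
      _ = ↑h⁻¹ * ((B₀ * ↑h) * ↑h⁻¹) := by rw [mul_assoc]
      _ = ↑h⁻¹ * ((↑h * !![v, 1; 1, 0]) * ↑h⁻¹) := by rw [hh]
      _ = (↑h⁻¹ * ↑h) * (!![v, 1; 1, 0] * ↑h⁻¹) := by
          rw [mul_assoc, mul_assoc]
      _ = !![v, 1; 1, 0] * ↑h⁻¹ := by rw [coe_inv_mul, one_mul]
  calc (↑g * ↑h⁻¹ : Matrix (Fin 2) (Fin 2) F) * B₀
      = ↑g * (↑h⁻¹ * B₀) := by rw [mul_assoc]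
    _ = ↑g * (!![v, 1; 1, 0] * ↑h⁻¹) := by rw [hstep]
    _ = (↑g * !![v, 1; 1, 0]) * ↑h⁻¹ := by rw [mul_assoc]
    _ = (M * ↑g) * ↑h⁻¹ := by rw [hg]
    _ = M * (↑g * ↑h⁻¹) := by rw [mul_assoc]

lemma psi_eq_iff (B₀ M : Matrix (Fin 2) (Fin 2) F) (u : Matrix.SpecialLinearGroup (Fin 2) F) :
    (u : Matrix (Fin 2) (Fin 2) F) * B₀ *
      ((u⁻¹ : Matrix.SpecialLinearGroup (Fin 2) F) : Matrix (Fin 2) (Fin 2) F) = M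
    ↔ (u : Matrix (Fin 2) (Fin 2) F) * B₀ = M * (u : Matrix (Fin 2) (Fin 2) F) := by
  constructor
  · intro hEq
    calc (u : Matrix (Fin 2) (Fin 2) F) * B₀
        = ↑u * B₀ * (↑u⁻¹ * ↑u) := by rw [coe_inv_mul, mul_one]
      _ = (↑u * B₀ * ↑u⁻¹) * ↑u := by simp only [mul_assoc]
      _ = M * ↑u := by rw [hEq]
  · intro hEq
    calc (↑u * B₀ * ↑u⁻¹ : Matrix (Fin 2) (Fin 2) F)
        = (M * ↑u) * ↑u⁻¹ := by rw [hEq]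
      _ = M * (↑u * ↑u⁻¹) := by rw [mul_assoc]
      _ = M := by rw [coe_mul_inv, mul_one]

lemma psi_mem {v : F} {B₀ : Matrix (Fin 2) (Fin 2) F} (hB : B₀ ∈ Xset v)
    (u : Matrix.SpecialLinearGroup (Fin 2) F) :
    (u : Matrix (Fin 2) (Fin 2) F) * B₀ *
      ((u⁻¹ : Matrix.SpecialLinearGroup (Fin 2) F) : Matrix (Fin 2) (Fin 2) F) ∈ Xset v := by
  simp only [Xset, TD, mem_filter, mem_univ, true_and] at hB ⊢
  obtain ⟨⟨htr, hdet⟩, hns⟩ := hB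
  set N := (u : Matrix (Fin 2) (Fin 2) F) * B₀ *
    ((u⁻¹ : Matrix.SpecialLinearGroup (Fin 2) F) : Matrix (Fin 2) (Fin 2) F) with hN
  have htrN : N 0 0 + N 1 1 = v := by
    have h1 : N.trace = B₀.trace := by
      rw [hN, Matrix.trace_mul_comm, ← mul_assoc, coe_inv_mul, one_mul]
    rw [Matrix.trace_fin_two, Matrix.trace_fin_two] at h1
    rw [h1]; exact htr
  have hdetN : N 0 0 * N 1 1 - N 0 1 * N 1 0 = -1 := by
    have h1 : N.det = B₀.det := by
      rw [hN, Matrix.det_mul, Matrix.det_mul]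
      rw [Matrix.SpecialLinearGroup.det_coe, Matrix.SpecialLinearGroup.det_coe]
      ring
    rw [Matrix.det_fin_two, Matrix.det_fin_two] at h1
    rw [h1]; exact hdet
  refine ⟨⟨htrN, hdetN⟩, ?_⟩
  rintro ⟨h01, h10, hdiag⟩
  apply hns
  have hscal : N = N 0 0 • (1 : Matrix (Fin 2) (Fin 2) F) := by
    ext i j
    fin_cases i <;> fin_cases j <;>
      simp [Matrix.one_apply, h01, h10, hdiag.symm]
  have hBscal : B₀ = N 0 0 • (1 : Matrix (Fin 2) (Fin 2) F) := by
    calc B₀ = (↑u⁻¹ * ↑u) * B₀ * (↑u⁻¹ * ↑u) := by rw [coe_inv_mul, one_mul, mul_one]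
      _ = ↑u⁻¹ * (↑u * B₀ * ↑u⁻¹) * ↑u := by simp only [mul_assoc]
      _ = ↑u⁻¹ * N * ↑u := by rw [← hN]
      _ = ↑u⁻¹ * (N 0 0 • (1 : Matrix (Fin 2) (Fin 2) F)) * ↑u := by rw [← hscal]
      _ = N 0 0 • (↑u⁻¹ * ↑u) := by
          rw [Matrix.mul_smul, Matrix.smul_mul, mul_one]
      _ = N 0 0 • (1 : Matrix (Fin 2) (Fin 2) F) := by rw [coe_inv_mul]
  constructor
  · rw [hBscal]; simp [Matrix.one_apply]
  constructor
  · rw [hBscal]; simp [Matrix.one_apply]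
  · rw [hBscal]; simp [Matrix.one_apply]

lemma fiber_card_eq {v : F}
    (hgood : ringChar F = 2 ∨ (Fintype.card F % 2 = 1 ∧ v^2 + 4 ≠ 0))
    {M B₀ : Matrix (Fin 2) (Fin 2) F} (hM : M ∈ Xset v) (hB : B₀ ∈ Xset v) :
    (univ.filter (fun u : Matrix.SpecialLinearGroup (Fin 2) F =>
      (u : Matrix (Fin 2) (Fin 2) F) * B₀ *
        ((u⁻¹ : Matrix.SpecialLinearGroup (Fin 2) F) : Matrix (Fin 2) (Fin 2) F) = M)).card
    = (univ.filter (fun u : Matrix.SpecialLinearGroup (Fin 2) F =>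
      (u : Matrix (Fin 2) (Fin 2) F) * B₀ *
        ((u⁻¹ : Matrix.SpecialLinearGroup (Fin 2) F) : Matrix (Fin 2) (Fin 2) F) = B₀)).card := by
  obtain ⟨s, hs⟩ := conj_trans hgood hM hB
  refine Finset.card_bij' (fun u _ => s⁻¹ * u) (fun u _ => s * u) ?_ ?_ ?_ ?_
  · intro u hu
    simp only [mem_filter, mem_univ, true_and, psi_eq_iff] at hu ⊢
    rw [Matrix.SpecialLinearGroup.coe_mul]
    calc (↑s⁻¹ * ↑u : Matrix (Fin 2) (Fin 2) F) * B₀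
        = ↑s⁻¹ * (↑u * B₀) := by rw [mul_assoc]
      _ = ↑s⁻¹ * (M * ↑u) := by rw [hu]
      _ = ↑s⁻¹ * ((M * (↑s * ↑s⁻¹)) * ↑u) := by rw [coe_mul_inv, mul_one]
      _ = ↑s⁻¹ * (((M * ↑s) * ↑s⁻¹) * ↑u) := by simp only [mul_assoc]
      _ = ↑s⁻¹ * (((↑s * B₀) * ↑s⁻¹) * ↑u) := by rw [hs]
      _ = (↑s⁻¹ * ↑s) * (B₀ * (↑s⁻¹ * ↑u)) := by simp only [mul_assoc]
      _ = B₀ * (↑s⁻¹ * ↑u) := by rw [coe_inv_mul, one_mul]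
  · intro u hu
    simp only [mem_filter, mem_univ, true_and, psi_eq_iff] at hu ⊢
    rw [Matrix.SpecialLinearGroup.coe_mul]
    calc (↑s * ↑u : Matrix (Fin 2) (Fin 2) F) * B₀
        = ↑s * (↑u * B₀) := by rw [mul_assoc]
      _ = ↑s * (B₀ * ↑u) := by rw [hu]
      _ = (↑s * B₀) * ↑u := by rw [mul_assoc]
      _ = (M * ↑s) * ↑u := by rw [hs]
      _ = M * (↑s * ↑u) := by rw [mul_assoc]
  · intro u _
    rw [← mul_assoc, mul_inv_cancel, one_mul]
  · intro u _
    rw [← mul_assoc, inv_mul_cancel, one_mul]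
lemma traceO_mul (e1 e4 : F) (M : Matrix (Fin 2) (Fin 2) F) :
    (!![e1, 1; 1, e4] * M).trace = e1 * M 0 0 + M 1 0 + M 0 1 + e4 * M 1 1 := by
  rw [Matrix.trace_fin_two]
  simp [Matrix.mul_apply, Fin.sum_univ_two]
  ring

lemma sum_fiber_card {α β : Type} [Fintype α] [Fintype β] [DecidableEq β] (f : α → β) :
    ∑ x : β, (univ.filter (fun a => f a = x)).card = Fintype.card α := by
  rw [← Finset.card_univ,
    Finset.card_eq_sum_card_fiberwise (f := f) (t := univ) (fun a _ => mem_univ _)]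

lemma Ncount_eq {v : F} (e1 e4 : F) {B₀ : Matrix (Fin 2) (Fin 2) F} (hB : B₀ ∈ Xset v)
    (hgood : ringChar F = 2 ∨ (Fintype.card F % 2 = 1 ∧ v^2 + 4 ≠ 0)) (x : F) :
    (univ.filter (fun u : Matrix.SpecialLinearGroup (Fin 2) F =>
      (!![e1, 1; 1, e4] * ((u : Matrix (Fin 2) (Fin 2) F) * B₀ *
        ((u⁻¹ : Matrix.SpecialLinearGroup (Fin 2) F) : Matrix (Fin 2) (Fin 2) F))).trace = x)).card
    = (Sx v e1 e4 x).card * (univ.filter (fun u : Matrix.SpecialLinearGroup (Fin 2) F =>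
        (u : Matrix (Fin 2) (Fin 2) F) * B₀ *
          ((u⁻¹ : Matrix.SpecialLinearGroup (Fin 2) F) : Matrix (Fin 2) (Fin 2) F) = B₀)).card := by
  have hmaps : ∀ u ∈ univ.filter (fun u : Matrix.SpecialLinearGroup (Fin 2) F =>
      (!![e1, 1; 1, e4] * ((u : Matrix (Fin 2) (Fin 2) F) * B₀ *
        ((u⁻¹ : Matrix.SpecialLinearGroup (Fin 2) F) : Matrix (Fin 2) (Fin 2) F))).trace = x),
      (u : Matrix (Fin 2) (Fin 2) F) * B₀ *
        ((u⁻¹ : Matrix.SpecialLinearGroup (Fin 2) F) : Matrix (Fin 2) (Fin 2) F) ∈ Sx v e1 e4 x := by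
    intro u hu
    simp only [mem_filter, mem_univ, true_and] at hu
    refine mem_filter.mpr ⟨psi_mem hB u, ?_⟩
    rw [← traceO_mul]
    exact hu
  rw [Finset.card_eq_sum_card_fiberwise hmaps]
  have hfib : ∀ M ∈ Sx v e1 e4 x,
      ((univ.filter (fun u : Matrix.SpecialLinearGroup (Fin 2) F =>
        (!![e1, 1; 1, e4] * ((u : Matrix (Fin 2) (Fin 2) F) * B₀ *
          ((u⁻¹ : Matrix.SpecialLinearGroup (Fin 2) F) : Matrix (Fin 2) (Fin 2) F))).trace = x)).filter
        (fun u : Matrix.SpecialLinearGroup (Fin 2) F => (u : Matrix (Fin 2) (Fin 2) F) * B₀ *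
          ((u⁻¹ : Matrix.SpecialLinearGroup (Fin 2) F) : Matrix (Fin 2) (Fin 2) F) = M)).card
      = (univ.filter (fun u : Matrix.SpecialLinearGroup (Fin 2) F =>
        (u : Matrix (Fin 2) (Fin 2) F) * B₀ *
          ((u⁻¹ : Matrix.SpecialLinearGroup (Fin 2) F) : Matrix (Fin 2) (Fin 2) F) = B₀)).card := by
    intro M hM
    have hMX : M ∈ Xset v := (mem_filter.mp hM).1
    have htrM : (!![e1, 1; 1, e4] * M).trace = x := by
      rw [traceO_mul]
      exact (mem_filter.mp hM).2
    have hset : (univ.filter (fun u : Matrix.SpecialLinearGroup (Fin 2) F =>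
        (!![e1, 1; 1, e4] * ((u : Matrix (Fin 2) (Fin 2) F) * B₀ *
          ((u⁻¹ : Matrix.SpecialLinearGroup (Fin 2) F) : Matrix (Fin 2) (Fin 2) F))).trace = x)).filter
        (fun u : Matrix.SpecialLinearGroup (Fin 2) F => (u : Matrix (Fin 2) (Fin 2) F) * B₀ *
          ((u⁻¹ : Matrix.SpecialLinearGroup (Fin 2) F) : Matrix (Fin 2) (Fin 2) F) = M)
        = univ.filter (fun u : Matrix.SpecialLinearGroup (Fin 2) F =>
            (u : Matrix (Fin 2) (Fin 2) F) * B₀ *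
              ((u⁻¹ : Matrix.SpecialLinearGroup (Fin 2) F) : Matrix (Fin 2) (Fin 2) F) = M) := by
      ext u
      simp only [mem_filter, mem_univ, true_and]
      constructor
      · exact fun h => h.2
      · intro h
        refine ⟨?_, h⟩
        rw [h]
        exact htrM
    rw [hset]
    exact fiber_card_eq hgood hMX hB
  rw [Finset.sum_congr rfl hfib, Finset.sum_const, smul_eq_mul]

lemma cardG_eq {v : F} {B₀ : Matrix (Fin 2) (Fin 2) F} (hB : B₀ ∈ Xset v)
    (hgood : ringChar F = 2 ∨ (Fintype.card F % 2 = 1 ∧ v^2 + 4 ≠ 0)) :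
    Fintype.card (Matrix.SpecialLinearGroup (Fin 2) F)
    = (Xset v).card * (univ.filter (fun u : Matrix.SpecialLinearGroup (Fin 2) F =>
        (u : Matrix (Fin 2) (Fin 2) F) * B₀ *
          ((u⁻¹ : Matrix.SpecialLinearGroup (Fin 2) F) : Matrix (Fin 2) (Fin 2) F) = B₀)).card := by
  rw [← Finset.card_univ,
    Finset.card_eq_sum_card_fiberwise (t := Xset v) (fun u _ => psi_mem hB u)]
  have hfib : ∀ M ∈ Xset v,
      ((univ : Finset (Matrix.SpecialLinearGroup (Fin 2) F)).filter
        (fun u : Matrix.SpecialLinearGroup (Fin 2) F => (u : Matrix (Fin 2) (Fin 2) F) * B₀ *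
          ((u⁻¹ : Matrix.SpecialLinearGroup (Fin 2) F) : Matrix (Fin 2) (Fin 2) F) = M)).card
      = (univ.filter (fun u : Matrix.SpecialLinearGroup (Fin 2) F =>
        (u : Matrix (Fin 2) (Fin 2) F) * B₀ *
          ((u⁻¹ : Matrix.SpecialLinearGroup (Fin 2) F) : Matrix (Fin 2) (Fin 2) F) = B₀)).card :=
    fun M hM => fiber_card_eq hgood hM hB
  rw [Finset.sum_congr rfl hfib, Finset.sum_const, smul_eq_mul]

lemma T_pos {B₀ : Matrix (Fin 2) (Fin 2) F} :
    0 < (univ.filter (fun u : Matrix.SpecialLinearGroup (Fin 2) F =>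
        (u : Matrix (Fin 2) (Fin 2) F) * B₀ *
          ((u⁻¹ : Matrix.SpecialLinearGroup (Fin 2) F) : Matrix (Fin 2) (Fin 2) F) = B₀)).card := by
  refine Finset.card_pos.mpr ⟨1, ?_⟩
  simp only [mem_filter, mem_univ, true_and, psi_eq_iff]
  rw [Matrix.SpecialLinearGroup.coe_one, one_mul, mul_one]
lemma abs_eq_two_max_sub (t : ℝ) : |t| = 2 * max t 0 - t := by
  rcases le_total t 0 with h | h
  · rw [abs_of_nonpos h, max_eq_right h]; ring
  · rw [abs_of_nonneg h, max_eq_left h]; ring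

lemma main_bound {v e1 e4 : F} {B₀ : Matrix (Fin 2) (Fin 2) F} (hB : B₀ ∈ Xset v)
    (hgood : ringChar F = 2 ∨ (Fintype.card F % 2 = 1 ∧ v^2 + 4 ≠ 0))
    (hq : 4 ≤ Fintype.card F) :
    (∀ x : F,
      ((univ.filter (fun u : Matrix.SpecialLinearGroup (Fin 2) F =>
        (!![e1, 1; 1, e4] * ((u : Matrix (Fin 2) (Fin 2) F) * B₀ *
          ((u⁻¹ : Matrix.SpecialLinearGroup (Fin 2) F) : Matrix (Fin 2) (Fin 2) F))).trace = x)).card : ℝ)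
        / (Fintype.card (Matrix.SpecialLinearGroup (Fin 2) F) : ℝ)
        ≤ 4 / (Fintype.card F : ℝ)) ∧
    ((∑ x : F,
      |((univ.filter (fun u : Matrix.SpecialLinearGroup (Fin 2) F =>
        (!![e1, 1; 1, e4] * ((u : Matrix (Fin 2) (Fin 2) F) * B₀ *
          ((u⁻¹ : Matrix.SpecialLinearGroup (Fin 2) F) : Matrix (Fin 2) (Fin 2) F))).trace = x)).card : ℝ)
        / (Fintype.card (Matrix.SpecialLinearGroup (Fin 2) F) : ℝ)
        - 1 / (Fintype.card F : ℝ)|)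
      ≤ 48 / (Fintype.card F : ℝ)) := by
  have hq4 : (4:ℝ) ≤ (Fintype.card F : ℝ) := by exact_mod_cast hq
  have hq0 : (0:ℝ) < (Fintype.card F : ℝ) := by linarith
  have hT0 : (0:ℝ) < ((univ.filter (fun u : Matrix.SpecialLinearGroup (Fin 2) F =>
      (u : Matrix (Fin 2) (Fin 2) F) * B₀ *
        ((u⁻¹ : Matrix.SpecialLinearGroup (Fin 2) F) : Matrix (Fin 2) (Fin 2) F) = B₀)).card : ℝ) := by
    exact_mod_cast T_pos
  have hXc_low : (Fintype.card F : ℝ) * ((Fintype.card F : ℝ) - 1) - 2 ≤ ((Xset v).card : ℝ) := by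
    have h12 : Fintype.card F * (Fintype.card F - 1) ≤ (Xset v).card + 2 :=
      le_trans (TD_card_lower v) (TD_card_upper v)
    have h3 : ((Fintype.card F * (Fintype.card F - 1) : ℕ) : ℝ) ≤ (((Xset v).card + 2 : ℕ) : ℝ) := by
      exact_mod_cast h12
    push_cast [Nat.cast_sub (by omega : 1 ≤ Fintype.card F)] at h3
    linarith
  have hXc0 : (0:ℝ) < ((Xset v).card : ℝ) := by nlinarith
  have hn : ((Fintype.card (Matrix.SpecialLinearGroup (Fin 2) F) : ℕ) : ℝ)
      = ((Xset v).card : ℝ) * ((univ.filter (fun u : Matrix.SpecialLinearGroup (Fin 2) F =>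
        (u : Matrix (Fin 2) (Fin 2) F) * B₀ *
          ((u⁻¹ : Matrix.SpecialLinearGroup (Fin 2) F) : Matrix (Fin 2) (Fin 2) F) = B₀)).card : ℝ) := by
    exact_mod_cast cardG_eq hB hgood
  have hn0 : (0:ℝ) < ((Fintype.card (Matrix.SpecialLinearGroup (Fin 2) F) : ℕ) : ℝ) := by
    rw [hn]; exact mul_pos hXc0 hT0
  have hpx : ∀ x : F,
      ((univ.filter (fun u : Matrix.SpecialLinearGroup (Fin 2) F =>
        (!![e1, 1; 1, e4] * ((u : Matrix (Fin 2) (Fin 2) F) * B₀ *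
          ((u⁻¹ : Matrix.SpecialLinearGroup (Fin 2) F) : Matrix (Fin 2) (Fin 2) F))).trace = x)).card : ℝ)
        / (Fintype.card (Matrix.SpecialLinearGroup (Fin 2) F) : ℝ)
      = ((Sx v e1 e4 x).card : ℝ) / ((Xset v).card : ℝ) := by
    intro x
    rw [Ncount_eq e1 e4 hB hgood x, hn]
    push_cast
    rw [mul_comm ((Xset v).card : ℝ)]
    rw [mul_comm ((Sx v e1 e4 x).card : ℝ)]
    rw [mul_div_mul_left _ _ (ne_of_gt hT0)]
  have hpoint : ∀ x : F,
      ((univ.filter (fun u : Matrix.SpecialLinearGroup (Fin 2) F =>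
        (!![e1, 1; 1, e4] * ((u : Matrix (Fin 2) (Fin 2) F) * B₀ *
          ((u⁻¹ : Matrix.SpecialLinearGroup (Fin 2) F) : Matrix (Fin 2) (Fin 2) F))).trace = x)).card : ℝ)
        / (Fintype.card (Matrix.SpecialLinearGroup (Fin 2) F) : ℝ)
        ≤ 4 / (Fintype.card F : ℝ) := by
    intro x
    rw [hpx x, div_le_div_iff₀ hXc0 hq0]
    have hS : ((Sx v e1 e4 x).card : ℝ) ≤ 2 * (Fintype.card F : ℝ) := by
      exact_mod_cast Sx_card_le_two_q v e1 e4 x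
    nlinarith
  refine ⟨hpoint, ?_⟩
  -- the bad set
  set BadF : Finset F := (badSet v (e4 - e1)).image (fun y => y + e1*v) with hBadF
  have hBadcard : (BadF.card : ℝ) ≤ 4 := by
    have h1 : BadF.card ≤ 4 := le_trans Finset.card_image_le (badSet_card_le v (e4 - e1))
    exact_mod_cast h1
  have hgoodx : ∀ x : F, x ∉ BadF → ((Sx v e1 e4 x).card : ℝ) ≤ (Fintype.card F : ℝ) + 2 := by
    intro x hx
    have hnotmem : x - e1*v ∉ badSet v (e4 - e1) := by
      intro hmem
      exact hx (Finset.mem_image.mpr ⟨x - e1*v, hmem, by ring⟩)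
    have := Sx_card_le_good v e1 e4 x hnotmem
    exact_mod_cast this
  have hgoodx2 : ∀ x : F, x ∉ BadF →
      ((Sx v e1 e4 x).card : ℝ) / ((Xset v).card : ℝ) - 1 / (Fintype.card F : ℝ)
        ≤ 8 / (Fintype.card F : ℝ)^2 := by
    intro x hx
    have h1 : ((Sx v e1 e4 x).card : ℝ) / ((Xset v).card : ℝ)
        ≤ ((Fintype.card F : ℝ) + 8) / (Fintype.card F : ℝ)^2 := by
      rw [div_le_div_iff₀ hXc0 (by positivity)]
      have := hgoodx x hx
      nlinarith
    have h2 : ((Fintype.card F : ℝ) + 8) / (Fintype.card F : ℝ)^2 - 1 / (Fintype.card F : ℝ)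
        = 8 / (Fintype.card F : ℝ)^2 := by
      field_simp
      ring
    linarith
  -- sum of probabilities is 1
  have hsumN : ∑ x : F,
      ((univ.filter (fun u : Matrix.SpecialLinearGroup (Fin 2) F =>
        (!![e1, 1; 1, e4] * ((u : Matrix (Fin 2) (Fin 2) F) * B₀ *
          ((u⁻¹ : Matrix.SpecialLinearGroup (Fin 2) F) : Matrix (Fin 2) (Fin 2) F))).trace = x)).card : ℝ)
      = ((Fintype.card (Matrix.SpecialLinearGroup (Fin 2) F) : ℕ) : ℝ) := by
    exact_mod_cast congrArg (Nat.cast (R := ℝ)) (sum_fiber_card (fun u : Matrix.SpecialLinearGroup (Fin 2) F =>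
      (!![e1, 1; 1, e4] * ((u : Matrix (Fin 2) (Fin 2) F) * B₀ *
        ((u⁻¹ : Matrix.SpecialLinearGroup (Fin 2) F) : Matrix (Fin 2) (Fin 2) F))).trace))
  have hsump : ∑ x : F,
      ((univ.filter (fun u : Matrix.SpecialLinearGroup (Fin 2) F =>
        (!![e1, 1; 1, e4] * ((u : Matrix (Fin 2) (Fin 2) F) * B₀ *
          ((u⁻¹ : Matrix.SpecialLinearGroup (Fin 2) F) : Matrix (Fin 2) (Fin 2) F))).trace = x)).card : ℝ)
        / (Fintype.card (Matrix.SpecialLinearGroup (Fin 2) F) : ℝ) = 1 := by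
    rw [← Finset.sum_div, hsumN, div_self (ne_of_gt hn0)]
  have hsumu : ∑ _x : F, 1 / (Fintype.card F : ℝ) = 1 := by
    rw [Finset.sum_const, Finset.card_univ, nsmul_eq_mul]
    field_simp
  -- main estimate
  have hmax : ∀ x : F,
      max (((univ.filter (fun u : Matrix.SpecialLinearGroup (Fin 2) F =>
        (!![e1, 1; 1, e4] * ((u : Matrix (Fin 2) (Fin 2) F) * B₀ *
          ((u⁻¹ : Matrix.SpecialLinearGroup (Fin 2) F) : Matrix (Fin 2) (Fin 2) F))).trace = x)).card : ℝ)
        / (Fintype.card (Matrix.SpecialLinearGroup (Fin 2) F) : ℝ) - 1 / (Fintype.card F : ℝ)) 0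
      ≤ if x ∈ BadF then 4 / (Fintype.card F : ℝ) else 8 / (Fintype.card F : ℝ)^2 := by
    intro x
    by_cases hx : x ∈ BadF
    · rw [if_pos hx]
      refine max_le ?_ (by positivity)
      have := hpoint x
      have h1q : 0 ≤ 1 / (Fintype.card F : ℝ) := by positivity
      linarith
    · rw [if_neg hx]
      refine max_le ?_ (by positivity)
      rw [hpx x]
      exact hgoodx2 x hx
  have hsummax : ∑ x : F,
      max (((univ.filter (fun u : Matrix.SpecialLinearGroup (Fin 2) F =>
        (!![e1, 1; 1, e4] * ((u : Matrix (Fin 2) (Fin 2) F) * B₀ *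
          ((u⁻¹ : Matrix.SpecialLinearGroup (Fin 2) F) : Matrix (Fin 2) (Fin 2) F))).trace = x)).card : ℝ)
        / (Fintype.card (Matrix.SpecialLinearGroup (Fin 2) F) : ℝ) - 1 / (Fintype.card F : ℝ)) 0
      ≤ 24 / (Fintype.card F : ℝ) := by
    refine le_trans (Finset.sum_le_sum (fun x _ => hmax x)) ?_
    rw [Finset.sum_ite]
    have hc1 : (univ.filter (fun x : F => x ∈ BadF)).card = BadF.card := by
      congr 1
      ext x
      simp
    have hc2 : ((univ.filter (fun x : F => ¬(x ∈ BadF))).card : ℝ) ≤ (Fintype.card F : ℝ) := by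
      have : (univ.filter (fun x : F => ¬(x ∈ BadF))).card ≤ Fintype.card F := by
        rw [← Finset.card_univ]
        exact Finset.card_filter_le _ _
      exact_mod_cast this
    rw [Finset.sum_const, Finset.sum_const, hc1, nsmul_eq_mul, nsmul_eq_mul]
    have b1 : (BadF.card : ℝ) * (4 / (Fintype.card F : ℝ)) ≤ 4 * (4 / (Fintype.card F : ℝ)) :=
      mul_le_mul_of_nonneg_right hBadcard (by positivity)
    have b2 : ((univ.filter (fun x : F => ¬(x ∈ BadF))).card : ℝ) * (8 / (Fintype.card F : ℝ)^2)
        ≤ (Fintype.card F : ℝ) * (8 / (Fintype.card F : ℝ)^2) :=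
      mul_le_mul_of_nonneg_right hc2 (by positivity)
    have b3 : 4 * (4 / (Fintype.card F : ℝ)) + (Fintype.card F : ℝ) * (8 / (Fintype.card F : ℝ)^2)
        = 24 / (Fintype.card F : ℝ) := by
      field_simp
      ring
    linarith
  calc ∑ x : F,
      |((univ.filter (fun u : Matrix.SpecialLinearGroup (Fin 2) F =>
        (!![e1, 1; 1, e4] * ((u : Matrix (Fin 2) (Fin 2) F) * B₀ *
          ((u⁻¹ : Matrix.SpecialLinearGroup (Fin 2) F) : Matrix (Fin 2) (Fin 2) F))).trace = x)).card : ℝ)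
        / (Fintype.card (Matrix.SpecialLinearGroup (Fin 2) F) : ℝ)
        - 1 / (Fintype.card F : ℝ)|
      = ∑ x : F, (2 * max (((univ.filter (fun u : Matrix.SpecialLinearGroup (Fin 2) F =>
        (!![e1, 1; 1, e4] * ((u : Matrix (Fin 2) (Fin 2) F) * B₀ *
          ((u⁻¹ : Matrix.SpecialLinearGroup (Fin 2) F) : Matrix (Fin 2) (Fin 2) F))).trace = x)).card : ℝ)
        / (Fintype.card (Matrix.SpecialLinearGroup (Fin 2) F) : ℝ) - 1 / (Fintype.card F : ℝ)) 0
        - (((univ.filter (fun u : Matrix.SpecialLinearGroup (Fin 2) F =>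
        (!![e1, 1; 1, e4] * ((u : Matrix (Fin 2) (Fin 2) F) * B₀ *
          ((u⁻¹ : Matrix.SpecialLinearGroup (Fin 2) F) : Matrix (Fin 2) (Fin 2) F))).trace = x)).card : ℝ)
        / (Fintype.card (Matrix.SpecialLinearGroup (Fin 2) F) : ℝ) - 1 / (Fintype.card F : ℝ))) :=
      Finset.sum_congr rfl (fun x _ => abs_eq_two_max_sub _)
    _ ≤ 48 / (Fintype.card F : ℝ) := by
      rw [Finset.sum_sub_distrib, Finset.sum_sub_distrib, ← Finset.mul_sum, hsump, hsumu]
      have h2 := mul_le_mul_of_nonneg_left hsummax (by norm_num : (0:ℝ) ≤ 2)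
      have h3 : 2 * (24 / (Fintype.card F : ℝ)) = 48 / (Fintype.card F : ℝ) := by ring
      linarith
lemma companion_mem_left (t : F) : !![t, 1; 1, (0:F)] ∈ Xset t := by
  refine mem_filter.mpr ⟨mem_filter.mpr ⟨mem_univ _, ?_, ?_⟩, ?_⟩ <;> simp

lemma companion_mem_right (t : F) : !![(0:F), 1; 1, t] ∈ Xset t := by
  refine mem_filter.mpr ⟨mem_filter.mpr ⟨mem_univ _, ?_, ?_⟩, ?_⟩ <;> simp

lemma filter_assoc_eq (ww vv x : F) :
    (univ.filter (fun u : Matrix.SpecialLinearGroup (Fin 2) F =>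
      Matrix.trace (!![(0:F), 1; 1, ww] * (u : Matrix (Fin 2) (Fin 2) F) * !![vv, 1; 1, 0] *
        ((u⁻¹ : Matrix.SpecialLinearGroup (Fin 2) F) : Matrix (Fin 2) (Fin 2) F)) = x))
    = (univ.filter (fun u : Matrix.SpecialLinearGroup (Fin 2) F =>
      (!![(0:F), 1; 1, ww] * ((u : Matrix (Fin 2) (Fin 2) F) * !![vv, 1; 1, 0] *
        ((u⁻¹ : Matrix.SpecialLinearGroup (Fin 2) F) : Matrix (Fin 2) (Fin 2) F))).trace = x)) := by
  apply Finset.filter_congr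
  intro u _
  rw [show (!![(0:F), 1; 1, ww] * (u : Matrix (Fin 2) (Fin 2) F) * !![vv, 1; 1, 0] *
      ((u⁻¹ : Matrix.SpecialLinearGroup (Fin 2) F) : Matrix (Fin 2) (Fin 2) F))
      = !![(0:F), 1; 1, ww] * ((u : Matrix (Fin 2) (Fin 2) F) * !![vv, 1; 1, 0] *
        ((u⁻¹ : Matrix.SpecialLinearGroup (Fin 2) F) : Matrix (Fin 2) (Fin 2) F)) from by
    simp only [mul_assoc]]

lemma trace_conj_swap (A B : Matrix (Fin 2) (Fin 2) F) (u : Matrix.SpecialLinearGroup (Fin 2) F) :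
    (B * (((u⁻¹ : Matrix.SpecialLinearGroup (Fin 2) F) : Matrix (Fin 2) (Fin 2) F) * A *
      (u : Matrix (Fin 2) (Fin 2) F))).trace
    = (A * (u : Matrix (Fin 2) (Fin 2) F) * B *
      ((u⁻¹ : Matrix.SpecialLinearGroup (Fin 2) F) : Matrix (Fin 2) (Fin 2) F)).trace := by
  calc (B * (((u⁻¹ : Matrix.SpecialLinearGroup (Fin 2) F) : Matrix (Fin 2) (Fin 2) F) * A *
        (u : Matrix (Fin 2) (Fin 2) F))).trace
      = ((B * ((u⁻¹ : Matrix.SpecialLinearGroup (Fin 2) F) : Matrix (Fin 2) (Fin 2) F) * A) *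
        (u : Matrix (Fin 2) (Fin 2) F)).trace := by
        rw [show B * (((u⁻¹ : Matrix.SpecialLinearGroup (Fin 2) F) : Matrix (Fin 2) (Fin 2) F) * A *
          (u : Matrix (Fin 2) (Fin 2) F)) = (B * ((u⁻¹ : Matrix.SpecialLinearGroup (Fin 2) F) :
            Matrix (Fin 2) (Fin 2) F) * A) * (u : Matrix (Fin 2) (Fin 2) F) from by
          simp only [mul_assoc]]
    _ = ((u : Matrix (Fin 2) (Fin 2) F) * (B * ((u⁻¹ : Matrix.SpecialLinearGroup (Fin 2) F) :
        Matrix (Fin 2) (Fin 2) F) * A)).trace := Matrix.trace_mul_comm _ _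
    _ = (((u : Matrix (Fin 2) (Fin 2) F) * B * ((u⁻¹ : Matrix.SpecialLinearGroup (Fin 2) F) :
        Matrix (Fin 2) (Fin 2) F)) * A).trace := by
        rw [show (u : Matrix (Fin 2) (Fin 2) F) * (B * ((u⁻¹ : Matrix.SpecialLinearGroup (Fin 2) F) :
          Matrix (Fin 2) (Fin 2) F) * A) = ((u : Matrix (Fin 2) (Fin 2) F) * B *
            ((u⁻¹ : Matrix.SpecialLinearGroup (Fin 2) F) : Matrix (Fin 2) (Fin 2) F)) * A from by
          simp only [mul_assoc]]
    _ = (A * ((u : Matrix (Fin 2) (Fin 2) F) * B * ((u⁻¹ : Matrix.SpecialLinearGroup (Fin 2) F) :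
        Matrix (Fin 2) (Fin 2) F))).trace := Matrix.trace_mul_comm _ _
    _ = (A * (u : Matrix (Fin 2) (Fin 2) F) * B *
        ((u⁻¹ : Matrix.SpecialLinearGroup (Fin 2) F) : Matrix (Fin 2) (Fin 2) F)).trace := by
        rw [show A * ((u : Matrix (Fin 2) (Fin 2) F) * B * ((u⁻¹ : Matrix.SpecialLinearGroup (Fin 2) F) :
          Matrix (Fin 2) (Fin 2) F)) = A * (u : Matrix (Fin 2) (Fin 2) F) * B *
            ((u⁻¹ : Matrix.SpecialLinearGroup (Fin 2) F) : Matrix (Fin 2) (Fin 2) F) from by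
          simp only [mul_assoc]]

lemma swap_card_eq (vv ww x : F) :
    (univ.filter (fun u : Matrix.SpecialLinearGroup (Fin 2) F =>
      Matrix.trace (!![(0:F), 1; 1, ww] * (u : Matrix (Fin 2) (Fin 2) F) * !![vv, 1; 1, 0] *
        ((u⁻¹ : Matrix.SpecialLinearGroup (Fin 2) F) : Matrix (Fin 2) (Fin 2) F)) = x)).card
    = (univ.filter (fun u : Matrix.SpecialLinearGroup (Fin 2) F =>
      (!![vv, 1; 1, (0:F)] * ((u : Matrix (Fin 2) (Fin 2) F) * !![(0:F), 1; 1, ww] *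
        ((u⁻¹ : Matrix.SpecialLinearGroup (Fin 2) F) : Matrix (Fin 2) (Fin 2) F))).trace = x)).card := by
  refine Finset.card_bij' (fun u _ => u⁻¹) (fun u _ => u⁻¹) ?_ ?_
    (fun u _ => inv_inv u) (fun u _ => inv_inv u)
  · intro u hu
    simp only [mem_filter, mem_univ, true_and] at hu ⊢
    rw [inv_inv, trace_conj_swap]
    exact hu
  · intro u hu
    simp only [mem_filter, mem_univ, true_and] at hu ⊢
    rw [← trace_conj_swap, inv_inv]
    exact hu

open scoped Classical in
theorem stmt14 :
    ∃ c C : ℝ, 0 < c ∧ 0 < C ∧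
      ∀ (F : Type) [Field F] [Fintype F] [DecidableEq F],
        ∀ v w : F,
          (Even (Fintype.card F) ∨
            (¬ Even (Fintype.card F) ∧ ¬ (v ^ 2 = -4 ∧ w ^ 2 = -4) ∧ ¬ (v = 0 ∧ w = 0))) →
          letI q : ℝ := (Fintype.card F : ℝ)
          letI n : ℝ := (Fintype.card (SpecialLinearGroup (Fin 2) F) : ℝ)
          ((∀ x : F,
            ((Finset.univ.filter (fun u : SpecialLinearGroup (Fin 2) F =>
                Matrix.trace (!![(0 : F), 1; 1, w] * (u : Matrix (Fin 2) (Fin 2) F) *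
                  !![v, 1; 1, 0] * ((u⁻¹ : SpecialLinearGroup (Fin 2) F) :
                    Matrix (Fin 2) (Fin 2) F)) = x)).card : ℝ) / n ≤ C / q) ∧
          ((1 : ℝ) / 2) * (∑ x : F,
              |((Finset.univ.filter (fun u : SpecialLinearGroup (Fin 2) F =>
                  Matrix.trace (!![(0 : F), 1; 1, w] * (u : Matrix (Fin 2) (Fin 2) F) *
                    !![v, 1; 1, 0] * ((u⁻¹ : SpecialLinearGroup (Fin 2) F) :
                      Matrix (Fin 2) (Fin 2) F)) = x)).card : ℝ) / n - 1 / q|) ≤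
            C * q ^ (-c)) := by
  refine ⟨1, 100, one_pos, by norm_num, ?_⟩
  intro F _ _ _ v w hyp
  have hq0' : 0 < Fintype.card F := Fintype.card_pos
  have hq0 : (0:ℝ) < (Fintype.card F : ℝ) := by exact_mod_cast hq0'
  have hn0' : 0 < Fintype.card (Matrix.SpecialLinearGroup (Fin 2) F) := Fintype.card_pos
  have hn0 : (0:ℝ) < (Fintype.card (Matrix.SpecialLinearGroup (Fin 2) F) : ℝ) := by
    exact_mod_cast hn0'
  have hrpow : (Fintype.card F : ℝ) ^ (-(1:ℝ)) = 1 / (Fintype.card F : ℝ) := by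
    rw [Real.rpow_neg_one]
    exact (one_div _).symm
  have hsumN : ∑ x : F,
      ((univ.filter (fun u : Matrix.SpecialLinearGroup (Fin 2) F =>
        Matrix.trace (!![(0 : F), 1; 1, w] * (u : Matrix (Fin 2) (Fin 2) F) *
          !![v, 1; 1, 0] * ((u⁻¹ : Matrix.SpecialLinearGroup (Fin 2) F) :
            Matrix (Fin 2) (Fin 2) F)) = x)).card : ℝ)
      = (Fintype.card (Matrix.SpecialLinearGroup (Fin 2) F) : ℝ) := by
    exact_mod_cast congrArg (Nat.cast (R := ℝ))
      (sum_fiber_card (fun u : Matrix.SpecialLinearGroup (Fin 2) F =>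
        Matrix.trace (!![(0 : F), 1; 1, w] * (u : Matrix (Fin 2) (Fin 2) F) *
          !![v, 1; 1, 0] * ((u⁻¹ : Matrix.SpecialLinearGroup (Fin 2) F) :
            Matrix (Fin 2) (Fin 2) F))))
  by_cases hq4 : 4 ≤ Fintype.card F
  · -- main case
    have hmain : (∀ x : F,
        ((univ.filter (fun u : Matrix.SpecialLinearGroup (Fin 2) F =>
          Matrix.trace (!![(0 : F), 1; 1, w] * (u : Matrix (Fin 2) (Fin 2) F) *
            !![v, 1; 1, 0] * ((u⁻¹ : Matrix.SpecialLinearGroup (Fin 2) F) :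
              Matrix (Fin 2) (Fin 2) F)) = x)).card : ℝ)
          / (Fintype.card (Matrix.SpecialLinearGroup (Fin 2) F) : ℝ)
          ≤ 4 / (Fintype.card F : ℝ)) ∧
        ((∑ x : F,
          |((univ.filter (fun u : Matrix.SpecialLinearGroup (Fin 2) F =>
            Matrix.trace (!![(0 : F), 1; 1, w] * (u : Matrix (Fin 2) (Fin 2) F) *
              !![v, 1; 1, 0] * ((u⁻¹ : Matrix.SpecialLinearGroup (Fin 2) F) :
                Matrix (Fin 2) (Fin 2) F)) = x)).card : ℝ)
            / (Fintype.card (Matrix.SpecialLinearGroup (Fin 2) F) : ℝ)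
            - 1 / (Fintype.card F : ℝ)|)
          ≤ 48 / (Fintype.card F : ℝ)) := by
      have hsplit : (ringChar F = 2 ∨ (Fintype.card F % 2 = 1 ∧ v^2 + 4 ≠ 0))
          ∨ (Fintype.card F % 2 = 1 ∧ w^2 + 4 ≠ 0) := by
        rcases hyp with heven | ⟨hodd', hvw, _⟩
        · exact Or.inl (Or.inl (FiniteField.even_card_iff_char_two.mpr (Nat.even_iff.mp heven)))
        · have hodd : Fintype.card F % 2 = 1 := Nat.not_even_iff.mp hodd'
          by_cases hv : v^2 + 4 ≠ 0
          · exact Or.inl (Or.inr ⟨hodd, hv⟩)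
          · push_neg at hv
            refine Or.inr ⟨hodd, ?_⟩
            intro hw'
            exact hvw ⟨by linear_combination hv, by linear_combination hw'⟩
      rcases hsplit with hgood | ⟨hodd, hw⟩
      · have hmb := main_bound (e1 := (0:F)) (e4 := w) (companion_mem_left v) hgood hq4
        exact ⟨fun x => by rw [filter_assoc_eq w v x]; exact hmb.1 x,
          le_trans (le_of_eq (Finset.sum_congr rfl
            (fun x _ => by rw [filter_assoc_eq w v x]))) hmb.2⟩
      · have hmb := main_bound (e1 := v) (e4 := (0:F)) (companion_mem_right w)
          (Or.inr ⟨hodd, hw⟩) hq4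
        constructor
        · intro x
          rw [swap_card_eq v w x]
          exact hmb.1 x
        · refine le_trans (le_of_eq (Finset.sum_congr rfl
            (fun x _ => by rw [swap_card_eq v w x]))) hmb.2
    refine ⟨?_, ?_⟩
    · intro x
      refine le_trans (hmain.1 x) ?_
      gcongr
      norm_num
    · have h1 : (100:ℝ) * (Fintype.card F : ℝ) ^ (-(1:ℝ)) = 100 / (Fintype.card F : ℝ) := by
        rw [hrpow]; ring
      rw [h1]
      have hm2 := hmain.2
      have hhalf := mul_le_mul_of_nonneg_left hm2 (by norm_num : (0:ℝ) ≤ 1/2)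
      have heq : (1/2 : ℝ) * (48 / (Fintype.card F : ℝ)) = 24 / (Fintype.card F : ℝ) := by ring
      have hle : (24:ℝ) / (Fintype.card F : ℝ) ≤ 100 / (Fintype.card F : ℝ) := by
        gcongr
        norm_num
      linarith
  · -- small q
    push_neg at hq4
    have hq3 : (Fintype.card F : ℝ) ≤ 3 := by exact_mod_cast Nat.lt_succ_iff.mp hq4
    constructor
    · intro x
      have hNle : ((univ.filter (fun u : Matrix.SpecialLinearGroup (Fin 2) F =>
          Matrix.trace (!![(0 : F), 1; 1, w] * (u : Matrix (Fin 2) (Fin 2) F) *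
            !![v, 1; 1, 0] * ((u⁻¹ : Matrix.SpecialLinearGroup (Fin 2) F) :
              Matrix (Fin 2) (Fin 2) F)) = x)).card : ℝ)
          ≤ (Fintype.card (Matrix.SpecialLinearGroup (Fin 2) F) : ℝ) := by
        have := Finset.card_filter_le (univ : Finset (Matrix.SpecialLinearGroup (Fin 2) F))
          (fun u => Matrix.trace (!![(0 : F), 1; 1, w] * (u : Matrix (Fin 2) (Fin 2) F) *
            !![v, 1; 1, 0] * ((u⁻¹ : Matrix.SpecialLinearGroup (Fin 2) F) :
              Matrix (Fin 2) (Fin 2) F)) = x)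
        rw [Finset.card_univ] at this
        exact_mod_cast this
      have h1 : ((univ.filter (fun u : Matrix.SpecialLinearGroup (Fin 2) F =>
          Matrix.trace (!![(0 : F), 1; 1, w] * (u : Matrix (Fin 2) (Fin 2) F) *
            !![v, 1; 1, 0] * ((u⁻¹ : Matrix.SpecialLinearGroup (Fin 2) F) :
              Matrix (Fin 2) (Fin 2) F)) = x)).card : ℝ)
          / (Fintype.card (Matrix.SpecialLinearGroup (Fin 2) F) : ℝ) ≤ 1 :=
        (div_le_one hn0).mpr hNle
      have h2 : (1:ℝ) ≤ 100 / (Fintype.card F : ℝ) := by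
        rw [le_div_iff₀ hq0]
        linarith
      linarith
    · have habs : ∀ x : F,
          |((univ.filter (fun u : Matrix.SpecialLinearGroup (Fin 2) F =>
            Matrix.trace (!![(0 : F), 1; 1, w] * (u : Matrix (Fin 2) (Fin 2) F) *
              !![v, 1; 1, 0] * ((u⁻¹ : Matrix.SpecialLinearGroup (Fin 2) F) :
                Matrix (Fin 2) (Fin 2) F)) = x)).card : ℝ)
            / (Fintype.card (Matrix.SpecialLinearGroup (Fin 2) F) : ℝ) - 1 / (Fintype.card F : ℝ)|
          ≤ ((univ.filter (fun u : Matrix.SpecialLinearGroup (Fin 2) F =>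
            Matrix.trace (!![(0 : F), 1; 1, w] * (u : Matrix (Fin 2) (Fin 2) F) *
              !![v, 1; 1, 0] * ((u⁻¹ : Matrix.SpecialLinearGroup (Fin 2) F) :
                Matrix (Fin 2) (Fin 2) F)) = x)).card : ℝ)
            / (Fintype.card (Matrix.SpecialLinearGroup (Fin 2) F) : ℝ) + 1 / (Fintype.card F : ℝ) := by
        intro x
        refine le_trans (abs_sub _ _) ?_
        rw [abs_of_nonneg (by positivity), abs_of_nonneg (by positivity)]
      have hsum2 : ∑ x : F,
          (((univ.filter (fun u : Matrix.SpecialLinearGroup (Fin 2) F =>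
            Matrix.trace (!![(0 : F), 1; 1, w] * (u : Matrix (Fin 2) (Fin 2) F) *
              !![v, 1; 1, 0] * ((u⁻¹ : Matrix.SpecialLinearGroup (Fin 2) F) :
                Matrix (Fin 2) (Fin 2) F)) = x)).card : ℝ)
            / (Fintype.card (Matrix.SpecialLinearGroup (Fin 2) F) : ℝ) + 1 / (Fintype.card F : ℝ))
          = 2 := by
        rw [Finset.sum_add_distrib, ← Finset.sum_div, hsumN, div_self (ne_of_gt hn0),
          Finset.sum_const, Finset.card_univ, nsmul_eq_mul]
        field_simp
        norm_num
      have hb : ∑ x : F,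
          |((univ.filter (fun u : Matrix.SpecialLinearGroup (Fin 2) F =>
            Matrix.trace (!![(0 : F), 1; 1, w] * (u : Matrix (Fin 2) (Fin 2) F) *
              !![v, 1; 1, 0] * ((u⁻¹ : Matrix.SpecialLinearGroup (Fin 2) F) :
                Matrix (Fin 2) (Fin 2) F)) = x)).card : ℝ)
            / (Fintype.card (Matrix.SpecialLinearGroup (Fin 2) F) : ℝ) - 1 / (Fintype.card F : ℝ)|
          ≤ 2 := by
        rw [← hsum2]
        exact Finset.sum_le_sum (fun x _ => habs x)
      have h2 : (1:ℝ) ≤ 100 * (Fintype.card F : ℝ) ^ (-(1:ℝ)) := by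
        rw [hrpow]
        rw [mul_one_div, le_div_iff₀ hq0]
        linarith
      linarith
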